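/- arXiv:2103.11020 — 3 statements merged into one kernel-verified Lean document; each statement's English description precedes it below -/
import Mathlib

section
/- Let A = F⁻¹ Λ F with Λ diagonal having pairwise distinct entries, and let M = F Λ* F⁻¹. Then for every vector t ∈ ℂ^N there exists a polynomial P of degree < N such that P(M) = F · diag(t) · F⁻¹. Consequently, for all signals s, F · (t ⊙ s) = P(M) · (F s), where ⊙ is the entrywise (Hadamard) product. -/
open Matrix

/-- With `A = Finv L F`, `L` diagonal with pairwise distinct
diagonal entries, and spectral shift `M = F L* Finv`, for every `t` there is a
polynomial (of degree `< N`) `P` with `P(M) = F diag(t) Finv`; consequently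
pointwise multiplication by `t` in the vertex domain is LSI filtering by
`P(M)` in the spectral domain. -/
theorem hadamard_is_LSI_spectral_filtering (N : ℕ)
    (A F Finv L : Matrix (Fin N) (Fin N) ℂ)
    (hL : L.IsDiag) (hdist : Function.Injective fun i => L i i)
    (hFl : Finv * F = 1) (hFr : F * Finv = 1)
    (hA : A = Finv * L * F) (t : Fin N → ℂ) :
    ∃ p : Fin N → ℂ,
      (∑ n : Fin N, p n • (F * L.map (starRingEnd ℂ) * Finv) ^ (n : ℕ))
          = F * Matrix.diagonal t * Finv
        ∧ ∀ s : Fin N → ℂ,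
            F.mulVec (fun i => t i * s i)
              = (∑ n : Fin N, p n • (F * L.map (starRingEnd ℂ) * Finv) ^ (n : ℕ)).mulVec
                  (F.mulVec s) := by
  -- the conjugated eigenvalues
  set c : Fin N → ℂ := fun i => starRingEnd ℂ (L i i) with hc
  have hcinj : Function.Injective c := fun i j h => hdist ((starRingEnd ℂ).injective h)
  -- the Vandermonde system
  have hVdet : (Matrix.vandermonde c).det ≠ 0 :=
    Matrix.det_vandermonde_ne_zero_iff.mpr hcinj
  set p : Fin N → ℂ := (Matrix.vandermonde c)⁻¹.mulVec t with hpdef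
  have hVp : (Matrix.vandermonde c).mulVec p = t := by
    rw [hpdef, Matrix.mulVec_mulVec, Matrix.mul_nonsing_inv _ (Ne.isUnit hVdet), Matrix.one_mulVec]
  have hp : ∀ i, ∑ n : Fin N, p n * c i ^ (n : ℕ) = t i := by
    intro i
    have := congrFun hVp i
    simpa [Matrix.mulVec, dotProduct, Matrix.vandermonde_apply, mul_comm] using this
  -- L.map star is the diagonal matrix of c
  have hLd : L.map (starRingEnd ℂ) = Matrix.diagonal c := by
    rw [← hL.diagonal_diag]
    ext i j
    by_cases h : i = j <;> simp [Matrix.diagonal, Matrix.diag, h, hc]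
  -- powers of M
  have hpow : ∀ n : ℕ, (F * L.map (starRingEnd ℂ) * Finv) ^ n
      = F * (Matrix.diagonal c) ^ n * Finv := by
    intro n
    induction n with
    | zero => simp [hFr]
    | succ n ih =>
        rw [pow_succ, ih, hLd, pow_succ]
        simp only [mul_assoc]
        rw [← mul_assoc Finv F, hFl, one_mul]
  -- the main matrix identity
  have hmain : (∑ n : Fin N, p n • (F * L.map (starRingEnd ℂ) * Finv) ^ (n : ℕ))
      = F * Matrix.diagonal t * Finv := by
    have : (∑ n : Fin N, p n • (F * L.map (starRingEnd ℂ) * Finv) ^ (n : ℕ))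
        = F * (∑ n : Fin N, p n • (Matrix.diagonal c) ^ (n : ℕ)) * Finv := by
      rw [Finset.mul_sum, Finset.sum_mul]
      refine Finset.sum_congr rfl fun n _ => ?_
      rw [hpow, mul_smul_comm, smul_mul_assoc]
    rw [this]
    have hd : (∑ n : Fin N, p n • (Matrix.diagonal c) ^ (n : ℕ)) = Matrix.diagonal t := by
      ext i j
      simp only [Matrix.sum_apply, Matrix.smul_apply, Matrix.diagonal_pow,
        Matrix.diagonal_apply, Pi.pow_apply, smul_eq_mul]
      by_cases h : i = j
      · simp [h, hp j]
      · simp [h]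
    rw [hd]
  refine ⟨p, hmain, fun s => ?_⟩
  rw [hmain, Matrix.mulVec_mulVec,
    show F * Matrix.diagonal t * Finv * F = F * Matrix.diagonal t by
      rw [mul_assoc, hFl, mul_one],
    ← Matrix.mulVec_mulVec]
  have hts : (fun i => t i * s i) = Matrix.diagonal t *ᵥ s := by
    ext i; rw [Matrix.mulVec_diagonal]
  rw [hts]
end

section
/- Let F be an invertible N×N matrix, K ≤ N, with the top-left K×K block F⁻¹_{KK} of F⁻¹ invertible. Then every signal s ∈ ℂ^N whose spectrum ŝ = F s has the form [ŝ_K; 0_{N−K}] is perfectly reconstructed from its first K samples s_K by s = F⁻¹ · [ (F⁻¹_{KK})⁻¹ s_K ; 0_{N−K} ]. Equivalently, s = [ I_K ; F⁻¹_{(N−K)K}·(F⁻¹_{KK})⁻¹ ] s_K, where F⁻¹_{(N−K)K} is the bottom-left block of F⁻¹. -/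
open Matrix

lemma sum_castLE_of_vanish {N K : ℕ} (hK : K ≤ N) (f : Fin N → ℂ)
    (hf : ∀ j : Fin N, K ≤ (j : ℕ) → f j = 0) :
    ∑ j : Fin N, f j = ∑ k : Fin K, f (Fin.castLE hK k) := by
  have hmap : ∑ k : Fin K, f (Fin.castLE hK k)
      = ∑ j ∈ Finset.univ.map (Fin.castLEEmb hK), f j := by
    rw [Finset.sum_map]; rfl
  rw [hmap]
  symm
  apply Finset.sum_subset (Finset.subset_univ _)
  intro j _ hj
  apply hf
  by_contra h
  push_neg at h
  exact hj (Finset.mem_map.mpr ⟨⟨(j : ℕ), h⟩, Finset.mem_univ _, by simp [Fin.castLEEmb]⟩)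

/-- Perfect reconstruction. If the top-left `K×K` block
`F⁻¹_{KK}` of `F⁻¹` is invertible, then every signal `s` whose spectrum
`sh = F s` is supported on its first `K` entries is perfectly reconstructed
from its first `K` samples `s_K` by
`s = F⁻¹ [ (F⁻¹_{KK})⁻¹ s_K ; 0 ]`; equivalently the first `K` entries of `s`
are `s_K` and the remaining entries are `F⁻¹_{(N−K)K} (F⁻¹_{KK})⁻¹ s_K`. -/
theorem perfect_reconstruction (N K : ℕ) (hK : K ≤ N)
    (F : Matrix (Fin N) (Fin N) ℂ) (hF : IsUnit F.det)
    (hKK : IsUnit ((F⁻¹).submatrix (Fin.castLE hK) (Fin.castLE hK)))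
    (s : Fin N → ℂ) (hband : ∀ i : Fin N, K ≤ (i : ℕ) → F.mulVec s i = 0) :
    s = F⁻¹.mulVec (fun i : Fin N =>
        if h : (i : ℕ) < K then
          (((F⁻¹).submatrix (Fin.castLE hK) (Fin.castLE hK))⁻¹).mulVec
            (fun k : Fin K => s (Fin.castLE hK k)) ⟨(i : ℕ), h⟩
        else 0)
      ∧ ∀ j : Fin (N - K),
          s ⟨K + (j : ℕ), by have := j.isLt; omega⟩
            = ((Matrix.of fun (r : Fin (N - K)) (c : Fin K) =>
                  F⁻¹ ⟨K + (r : ℕ), by have := r.isLt; omega⟩ (Fin.castLE hK c))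
                * ((F⁻¹).submatrix (Fin.castLE hK) (Fin.castLE hK))⁻¹).mulVec
                (fun k : Fin K => s (Fin.castLE hK k)) j := by
  set B := (F⁻¹).submatrix (Fin.castLE hK) (Fin.castLE hK) with hB
  set sh := F.mulVec s with hsh
  have hs : s = F⁻¹.mulVec sh := by
    rw [hsh, Matrix.mulVec_mulVec, Matrix.nonsing_inv_mul F hF, Matrix.one_mulVec]
  -- s_K = B * sh_K
  have hkey : (fun k : Fin K => s (Fin.castLE hK k))
      = B.mulVec (fun k : Fin K => sh (Fin.castLE hK k)) := by
    funext k
    rw [hs]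
    show ∑ j : Fin N, F⁻¹ (Fin.castLE hK k) j * sh j = _
    rw [sum_castLE_of_vanish hK _ (fun j hj => by rw [hband j hj, mul_zero])]
    rfl
  have hBinv : ((B⁻¹).mulVec (fun k : Fin K => s (Fin.castLE hK k)))
      = (fun k : Fin K => sh (Fin.castLE hK k)) := by
    rw [hkey, Matrix.mulVec_mulVec, Matrix.nonsing_inv_mul B ((Matrix.isUnit_iff_isUnit_det B).mp hKK), Matrix.one_mulVec]
  have hvec : (fun i : Fin N =>
        if h : (i : ℕ) < K then
          (B⁻¹).mulVec (fun k : Fin K => s (Fin.castLE hK k)) ⟨(i : ℕ), h⟩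
        else 0) = sh := by
    funext i
    by_cases h : (i : ℕ) < K
    · rw [dif_pos h, hBinv]
      congr 1
    · rw [dif_neg h]
      exact (hband i (le_of_not_gt h)).symm
  constructor
  · rw [hvec, ← hs]
  · intro j
    have hjN : K + (j : ℕ) < N := by have := j.isLt; omega
    have lhs : s ⟨K + (j : ℕ), hjN⟩
        = ∑ k : Fin K, F⁻¹ ⟨K + (j : ℕ), hjN⟩ (Fin.castLE hK k) * sh (Fin.castLE hK k) := by
      rw [hs]
      show ∑ c : Fin N, F⁻¹ ⟨K + (j : ℕ), hjN⟩ c * sh c = _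
      rw [sum_castLE_of_vanish hK _ (fun c hc => by rw [hband c hc, mul_zero])]
    rw [lhs, ← Matrix.mulVec_mulVec, hBinv]
    rfl
end

section
/- Let F be invertible N×N, K ≤ N, δ = [1_K; 0_{N−K}], P = F diag(δ) F⁻¹, and suppose Q is an N×N matrix whose top K×N block Q_K satisfies Q_K · P_K = I_K where P_K = F_K F⁻¹_{KK}. Then for every bandlimited ŝ = [ŝ_K; 0], we have [1_K;0] ⊙ (Q · P · ŝ) = [ŝ_K; 0]; consequently s = F⁻¹ · ([1_K;0] ⊙ Q · ŝ_δ) where ŝ_δ = P ŝ is the spectrum of the subsampled signal. -/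
open Matrix

lemma sum_castLE_aux {M : Type*} [AddCommMonoid M] {N K : ℕ} (hK : K ≤ N)
    (g : Fin N → M) (h0 : ∀ m : Fin N, ¬ (m : ℕ) < K → g m = 0) :
    ∑ m : Fin N, g m = ∑ m : Fin K, g (Fin.castLE hK m) := by
  rw [← Finset.sum_subset (Finset.subset_univ (Finset.univ.map (Fin.castLEEmb hK)))]
  · rw [Finset.sum_map]; rfl
  · intro x _ hx
    apply h0
    intro hlt
    apply hx
    simp only [Finset.mem_map, Finset.mem_univ, true_and, Fin.castLEEmb]
    exact ⟨⟨x, hlt⟩, rfl⟩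

/-- Reconstruction by spectral filtering. If the top `K×N` block
`Q_K` of a spectral filter `Q` satisfies `Q_K · P_K = I_K` with
`P_K = F_K F⁻¹_{KK}` (the first `K` columns of `P = F diag(δ) F⁻¹`), then for
every bandlimited `ŝ = [ŝ_K; 0]`: `[1_K;0] ⊙ (Q P ŝ) = ŝ`, and consequently
`s = F⁻¹ ([1_K;0] ⊙ Q ŝ_δ)` where `ŝ_δ = P ŝ`. -/
theorem reconstruction_by_spectral_filtering (N K : ℕ) (hK : K ≤ N)
    (F : Matrix (Fin N) (Fin N) ℂ) (hF : IsUnit F.det)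
    (Q : Matrix (Fin N) (Fin N) ℂ)
    (hQ : (Q.submatrix (Fin.castLE hK) id)
        * ((F.submatrix id (Fin.castLE hK))
            * ((F⁻¹).submatrix (Fin.castLE hK) (Fin.castLE hK))) = 1)
    (sK : Fin K → ℂ) :
    (fun i : Fin N => (if (i : ℕ) < K then (1 : ℂ) else 0)
        * (Q.mulVec ((F * Matrix.diagonal (fun n : Fin N => if (n : ℕ) < K then (1 : ℂ) else 0)
            * F⁻¹).mulVec (fun i : Fin N => if h : (i : ℕ) < K then sK ⟨(i : ℕ), h⟩ else 0))) i)
      = (fun i : Fin N => if h : (i : ℕ) < K then sK ⟨(i : ℕ), h⟩ else 0)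
    ∧ F⁻¹.mulVec (fun i : Fin N => (if (i : ℕ) < K then (1 : ℂ) else 0)
        * (Q.mulVec ((F * Matrix.diagonal (fun n : Fin N => if (n : ℕ) < K then (1 : ℂ) else 0)
            * F⁻¹).mulVec (fun i : Fin N => if h : (i : ℕ) < K then sK ⟨(i : ℕ), h⟩ else 0))) i)
      = F⁻¹.mulVec (fun i : Fin N => if h : (i : ℕ) < K then sK ⟨(i : ℕ), h⟩ else 0) := by
  set δ : Fin N → ℂ := fun n => if (n : ℕ) < K then (1 : ℂ) else 0 with hδ
  set v : Fin N → ℂ := fun i => if h : (i : ℕ) < K then sK ⟨(i : ℕ), h⟩ else 0 with hv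
  set P : Matrix (Fin N) (Fin N) ℂ := F * Matrix.diagonal δ * F⁻¹ with hP
  -- entries of P
  have hPent : ∀ (n : Fin N) (j : Fin N),
      P n j = ∑ m : Fin K, F n (Fin.castLE hK m) * (F⁻¹) (Fin.castLE hK m) j := by
    intro n j
    have : P n j = ∑ m : Fin N, F n m * δ m * (F⁻¹) m j := by
      simp only [hP, Matrix.mul_apply]
      exact Finset.sum_congr rfl fun m _ => by rw [← Matrix.mul_apply, Matrix.mul_diagonal]
    rw [this]
    rw [sum_castLE_aux hK]
    · apply Finset.sum_congr rfl
      intro m _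
      have : δ (Fin.castLE hK m) = 1 := by simp [hδ, m.isLt]
      rw [this]; ring
    · intro m hm
      have : δ m = 0 := by simp [hδ, hm]
      rw [this]; ring
  -- identity on K-block of Q * P
  have hA : ∀ (a b : Fin K),
      (Q * P) (Fin.castLE hK a) (Fin.castLE hK b) = if a = b then (1 : ℂ) else 0 := by
    intro a b
    have h1 := congrFun (congrFun hQ a) b
    simp only [Matrix.mul_apply, Matrix.submatrix_apply, id, Matrix.one_apply] at h1
    simp only [Matrix.mul_apply, hPent]
    rw [← h1]
    try (apply Finset.sum_congr rfl
         intro n _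
         rw [Finset.mul_sum, Finset.mul_sum]
         exact Finset.sum_congr rfl fun m _ => by ring)
  have key : (fun i : Fin N => (if (i : ℕ) < K then (1 : ℂ) else 0)
      * (Q.mulVec (P.mulVec v)) i) = v := by
    funext i
    by_cases hi : (i : ℕ) < K
    · simp only [if_pos hi, one_mul]
      rw [Matrix.mulVec_mulVec]
      have hveq : v i = sK ⟨(i : ℕ), hi⟩ := by simp [hv, hi]
      rw [hveq]
      show ∑ j : Fin N, (Q * P) i j * v j = sK ⟨(i : ℕ), hi⟩
      rw [sum_castLE_aux hK]
      · have hcast : i = Fin.castLE hK ⟨(i : ℕ), hi⟩ := by ext; rfl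
        calc ∑ j : Fin K, (Q * P) i (Fin.castLE hK j) * v (Fin.castLE hK j)
            = ∑ j : Fin K, (if (⟨(i : ℕ), hi⟩ : Fin K) = j then (1 : ℂ) else 0) * sK j := by
              apply Finset.sum_congr rfl
              intro j _
              have h2 := hA ⟨(i : ℕ), hi⟩ j
              have h3 : v (Fin.castLE hK j) = sK j := by simp [hv, j.isLt]
              rw [h3, ← h2]; rfl
          _ = sK ⟨(i : ℕ), hi⟩ := by simp
      · intro m hm
        have : v m = 0 := by simp [hv, hm]
        rw [this]; ring
    · simp only [if_neg hi, zero_mul]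
      simp [hv, hi]
  exact ⟨key, by rw [key]⟩
end
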